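/- Let K = ℚ(r,s) be the field of rational functions in two variables r, s over ℚ. Let n ≥ 1, let R be an n×n integer matrix with R + Rᵀ invertible over ℚ, and set S := −Rᵀ. Suppose η, φ ∈ ℤⁿ satisfy, for every vector λ ∈ ℤⁿ with all entries nonnegative, the equality r^{λᵀ(Rᵀφ + Sᵀη)} · s^{λᵀ(Sᵀφ + Rᵀη)} = 1 in K. Then η = φ. -/

import Mathlib

open Matrix

/-- `K = ℚ(r,s)`, the field of rational functions in two variables over `ℚ`. -/
noncomputable abbrev K : Type := FractionRing (MvPolynomial (Fin 2) ℚ)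

/-- The element `r` of `K = ℚ(r,s)`. -/
noncomputable def rr : K := algebraMap (MvPolynomial (Fin 2) ℚ) K (MvPolynomial.X 0)

/-- The element `s` of `K = ℚ(r,s)`. -/
noncomputable def ss : K := algebraMap (MvPolynomial (Fin 2) ℚ) K (MvPolynomial.X 1)

/-- If `r^a s^b = 1` in `K = ℚ(r,s)` with integer exponents, then `a = b = 0`. -/
lemma key_aux (a b : ℤ) (h : rr ^ a * ss ^ b = 1) : a = 0 ∧ b = 0 := by
  have inj : Function.Injective (algebraMap (MvPolynomial (Fin 2) ℚ) K) :=
    IsFractionRing.injective _ _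
  have hr : rr ≠ 0 := by
    simpa [rr, map_ne_zero_iff _ inj] using (MvPolynomial.X_ne_zero (R := ℚ) (0 : Fin 2))
  have hs : ss ≠ 0 := by
    simpa [ss, map_ne_zero_iff _ inj] using (MvPolynomial.X_ne_zero (R := ℚ) (1 : Fin 2))
  have e1 : (a.toNat : ℤ) = a + ((-a).toNat : ℤ) := by omega
  have e2 : (b.toNat : ℤ) = b + ((-b).toNat : ℤ) := by omega
  have h2 : rr ^ a.toNat * ss ^ b.toNat = rr ^ (-a).toNat * ss ^ (-b).toNat := by
    have : rr ^ (a.toNat : ℤ) * ss ^ (b.toNat : ℤ)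
        = rr ^ ((-a).toNat : ℤ) * ss ^ ((-b).toNat : ℤ) := by
      rw [e1, e2, zpow_add₀ hr, zpow_add₀ hs]
      rw [mul_mul_mul_comm, h, one_mul]
    rw [zpow_natCast, zpow_natCast, zpow_natCast, zpow_natCast] at this; exact this
  have h3 : (MvPolynomial.X 0 : MvPolynomial (Fin 2) ℚ) ^ a.toNat * MvPolynomial.X 1 ^ b.toNat
      = MvPolynomial.X 0 ^ (-a).toNat * MvPolynomial.X 1 ^ (-b).toNat := by
    apply inj
    simpa [rr, ss, _root_.map_mul, map_pow] using h2
  have h4 : (Finsupp.single (0 : Fin 2) a.toNat + Finsupp.single 1 b.toNat)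
      = (Finsupp.single (0 : Fin 2) (-a).toNat + Finsupp.single 1 (-b).toNat) := by
    have := h3
    simp only [MvPolynomial.X_pow_eq_monomial, MvPolynomial.monomial_mul, mul_one] at this
    exact MvPolynomial.monomial_left_injective (one_ne_zero) this
  have ha : a.toNat = (-a).toNat := by
    have := DFunLike.congr_fun h4 (0 : Fin 2)
    simpa using this
  have hb : b.toNat = (-b).toNat := by
    have := DFunLike.congr_fun h4 (1 : Fin 2)
    simpa using this
  omega

/-- Lemma 3.2(i) of the paper in root-lattice coordinates: if `R + Rᵀ` is
invertible over `ℚ` and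
`r^{λᵀ(Rᵀφ + Sᵀη)} s^{λᵀ(Sᵀφ + Rᵀη)} = 1` for all `λ ∈ ℤⁿ` with nonnegative
entries, then `η = φ`. -/
theorem stmt11 (n : ℕ) (hn : 1 ≤ n)
    (R S : Matrix (Fin n) (Fin n) ℤ) (hS : S = -Rᵀ)
    (hinv : IsUnit ((R + Rᵀ).map ((↑) : ℤ → ℚ)))
    (η φ : Fin n → ℤ)
    (h : ∀ lam : Fin n → ℤ, (∀ i, 0 ≤ lam i) →
      rr ^ (dotProduct lam (Rᵀ.mulVec φ + Sᵀ.mulVec η)) *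
        ss ^ (dotProduct lam (Sᵀ.mulVec φ + Rᵀ.mulVec η)) = 1) :
    η = φ := by
  -- componentwise vanishing of both exponents
  have hzero : ∀ i, (Rᵀ.mulVec φ + Sᵀ.mulVec η) i = 0 ∧ (Sᵀ.mulVec φ + Rᵀ.mulVec η) i = 0 := by
    intro i
    have hlam := h (Pi.single i 1) (by
      intro j
      by_cases hj : j = i <;> simp [Pi.single, Function.update, hj])
    rw [single_dotProduct, single_dotProduct, one_mul, one_mul] at hlam
    exact key_aux _ _ hlam
  -- (R + Rᵀ) (φ - η) = 0 over ℤ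
  have hM : (R + Rᵀ).mulVec (φ - η) = 0 := by
    funext i
    obtain ⟨h1, h2⟩ := hzero i
    have hS' : Sᵀ = -R := by rw [hS]; simp
    rw [hS'] at h1 h2
    simp only [Pi.add_apply, Matrix.neg_mulVec, Pi.neg_apply] at h1 h2
    simp only [Matrix.add_mulVec, Matrix.mulVec_sub, Pi.add_apply, Pi.sub_apply, Pi.zero_apply]
    omega
  -- transfer to ℚ and use invertibility
  have hcast : ((R + Rᵀ).map ((↑) : ℤ → ℚ)).mulVec (fun i => ((φ i - η i : ℤ) : ℚ)) = 0 := by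
    funext i
    have := congrFun hM i
    simp only [Matrix.mulVec, dotProduct, Matrix.map_apply, Pi.zero_apply] at this ⊢
    push_cast
    exact_mod_cast congrArg (fun z : ℤ => (z : ℚ)) this
  obtain ⟨u, hu⟩ := hinv
  have hq : ∀ i, ((φ i - η i : ℤ) : ℚ) = 0 := by
    intro i
    have h5 : (↑u⁻¹ : Matrix (Fin n) (Fin n) ℚ).mulVec
        (((R + Rᵀ).map ((↑) : ℤ → ℚ)).mulVec (fun i => ((φ i - η i : ℤ) : ℚ)))
        = (fun i => ((φ i - η i : ℤ) : ℚ)) := by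
      rw [Matrix.mulVec_mulVec, ← hu, Units.inv_mul, Matrix.one_mulVec]
    rw [hcast, Matrix.mulVec_zero] at h5
    exact (congrFun h5 i).symm
  funext i
  have := hq i
  have : φ i - η i = 0 := by exact_mod_cast this
  omega
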